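/- Let P be a finitely generated abelian group, A ⊆ P a subgroup, and let G₀ be any group containing A as a subgroup. As B ranges over all subgroups with A ⊆ B ⊆ P, the amalgamated free products G₀ *_A B fall into only finitely many isomorphism classes. -/

import Mathlib

universe u

/-- The two-element family of groups `{G₀, B}` used to form the amalgam `G₀ *_A B`. -/
def AmalgFam (G₀ : Type u) (P : Type u) [CommGroup P] (B : Subgroup P) :
    Bool → Type u
  | true => G₀
  | false => ↥B

instance (G₀ : Type u) [Group G₀] (P : Type u) [CommGroup P] (B : Subgroup P) :
    ∀ i, Group (AmalgFam G₀ P B i)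
  | true => inferInstanceAs (Group G₀)
  | false => inferInstanceAs (Group ↥B)

/-- The pair of inclusions `A → G₀` and `A → B` defining the amalgam. -/
def AmalgMaps (G₀ : Type u) [Group G₀] (P : Type u) [CommGroup P]
    (A B : Subgroup P) (hAB : A ≤ B) (j : ↥A →* G₀) :
    ∀ i, ↥A →* AmalgFam G₀ P B i
  | true => j
  | false => Subgroup.inclusion hAB

/-- The amalgamated free product `G₀ *_A B`, as a pushout of groups. -/
def Amalg (G₀ : Type u) [Group G₀] (P : Type u) [CommGroup P]
    (A B : Subgroup P) (hAB : A ≤ B) (j : ↥A →* G₀) : Type u :=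
  Monoid.PushoutI (AmalgMaps G₀ P A B hAB j)

noncomputable instance (G₀ : Type u) [Group G₀] (P : Type u) [CommGroup P]
    (A B : Subgroup P) (hAB : A ≤ B) (j : ↥A →* G₀) :
    Group (Amalg G₀ P A B hAB j) :=
  inferInstanceAs (Group (Monoid.PushoutI (AmalgMaps G₀ P A B hAB j)))

/-- The family `{G₀, C × ℤᵏ}` used as targets. -/
def TFam (G₀ : Type u) (P : Type u) [CommGroup P] (C : Subgroup P) (m : ℕ) :
    Bool → Type u
  | true => G₀
  | false => ↥C × (Fin m → Multiplicative ℤ)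

instance (G₀ : Type u) [Group G₀] (P : Type u) [CommGroup P] (C : Subgroup P) (m : ℕ) :
    ∀ i, Group (TFam G₀ P C m i)
  | true => inferInstanceAs (Group G₀)
  | false => inferInstanceAs (Group (↥C × (Fin m → Multiplicative ℤ)))

def TMaps (G₀ : Type u) [Group G₀] (P : Type u) [CommGroup P]
    (A C : Subgroup P) (hAC : A ≤ C) (m : ℕ) (j : ↥A →* G₀) :
    ∀ i, ↥A →* TFam G₀ P C m i
  | true => j
  | false => (Subgroup.inclusion hAC).prod 1

open Monoid in
noncomputable def pushoutICongr {ι : Type*} {H : Type*} [Group H] {G G' : ι → Type*}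
    [∀ i, Group (G i)] [∀ i, Group (G' i)] (φ : ∀ i, H →* G i) (φ' : ∀ i, H →* G' i)
    (e : ∀ i, G i ≃* G' i) (he : ∀ i a, e i (φ i a) = φ' i a) :
    PushoutI φ ≃* PushoutI φ' := by
  refine MonoidHom.toMulEquiv
    (PushoutI.lift (fun i => (PushoutI.of i).comp (e i).toMonoidHom) (PushoutI.base φ') ?_)
    (PushoutI.lift (fun i => (PushoutI.of i).comp (e i).symm.toMonoidHom) (PushoutI.base φ) ?_)
    ?_ ?_
  · intro i; ext a
    simp [he i a, PushoutI.of_apply_eq_base]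
  · intro i; ext a
    have h : (e i).symm (φ' i a) = φ i a := by rw [← he i a, MulEquiv.symm_apply_apply]
    simp [h, PushoutI.of_apply_eq_base]
  · apply PushoutI.hom_ext
    · intro i; ext g
      simp
    · ext h
      simp
  · apply PushoutI.hom_ext
    · intro i; ext g
      simp
    · ext h
      simp

theorem comm_subgroup_fg {G : Type u} [CommGroup G] [Group.FG G] (H : Subgroup G) :
    Group.FG ↥H := by
  haveI : Module.Finite ℤ (Additive G) := Module.Finite.iff_addGroup_fg.mpr inferInstance
  haveI : IsNoetherian ℤ (Additive G) := inferInstance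
  have h := IsNoetherian.noetherian (AddSubgroup.toIntSubmodule H.toAddSubgroup)
  rw [Group.fg_iff_subgroup_fg, Subgroup.fg_iff_add_fg]
  have h2 := (Submodule.fg_iff_addSubgroup_fg _).mp h
  rwa [AddSubgroup.toIntSubmodule_toAddSubgroup] at h2

theorem exists_splitting (G : Type u) [CommGroup G] [Group.FG G] (C : Subgroup G)
    (hsat : ∀ (g : G) (n : ℕ), 0 < n → g ^ n ∈ C → g ∈ C) :
    ∃ (k : ℕ) (e : G ≃* ↥C × (Fin k → Multiplicative ℤ)),
      (∀ c : ↥C, e ↑c = (c, 1)) ∧ k = Module.finrank ℤ (Additive (G ⧸ C)) := by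
  classical
  haveI : Module.Finite ℤ (Additive (G ⧸ C)) := Module.Finite.iff_addGroup_fg.mpr inferInstance
  haveI : NoZeroSMulDivisors ℤ (Additive (G ⧸ C)) := by
    refine ⟨fun {z x} h => ?_⟩
    rcases eq_or_ne z 0 with hz | hz
    · exact Or.inl hz
    refine Or.inr ?_
    obtain ⟨g, hg⟩ := QuotientGroup.mk'_surjective C (Additive.toMul x)
    have hq : Additive.toMul x ^ z = 1 := by
      have := congrArg Additive.toMul h
      rwa [toMul_zsmul] at this
    have hq' : Additive.toMul x ^ (z.natAbs : ℤ) = 1 := by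
      rcases Int.natAbs_eq z with h' | h'
      · rw [← h', hq]
      · rw [← neg_neg (z.natAbs : ℤ), ← h', zpow_neg, hq, inv_one]
    rw [zpow_natCast] at hq'
    have hgn : g ^ z.natAbs ∈ C := by
      have h1 : ((g ^ z.natAbs : G) : G ⧸ C) = 1 := by
        rw [QuotientGroup.mk_pow]
        rw [show ((g : G) : G ⧸ C) = Additive.toMul x from hg]
        exact hq'
      exact (QuotientGroup.eq_one_iff _).mp h1
    have : g ∈ C := hsat g z.natAbs (Int.natAbs_pos.mpr hz) hgn
    have : Additive.toMul x = 1 := by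
      rw [← hg]
      exact (QuotientGroup.eq_one_iff _).mpr this
    exact congrArg Additive.ofMul this
  haveI : Module.Free ℤ (Additive (G ⧸ C)) := Module.free_of_finite_type_torsion_free'
  set k := Module.finrank ℤ (Additive (G ⧸ C)) with hkdef
  let b := Module.Free.chooseBasis ℤ (Additive (G ⧸ C))
  let eFin : Module.Free.ChooseBasisIndex ℤ (Additive (G ⧸ C)) ≃ Fin k :=
    Fintype.equivFinOfCardEq (Module.finrank_eq_card_chooseBasisIndex ℤ _).symm
  let lineq : Additive (G ⧸ C) ≃ₗ[ℤ] (Fin k → ℤ) :=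
    b.equivFun ≪≫ₗ LinearEquiv.piCongrLeft' ℤ (fun _ => ℤ) eFin
  let π : Additive G →+ Additive (G ⧸ C) := MonoidHom.toAdditive (QuotientGroup.mk' C)
  let lam : Additive G →ₗ[ℤ] (Fin k → ℤ) := lineq.toLinearMap ∘ₗ π.toIntLinearMap
  have hlam_apply : ∀ g : G, lam (Additive.ofMul g) =
      lineq (Additive.ofMul ((g : G ⧸ C))) := fun g => rfl
  have hlam_surj : LinearMap.range lam = ⊤ := by
    rw [LinearMap.range_eq_top]
    intro v
    obtain ⟨g, hg⟩ := QuotientGroup.mk'_surjective C (Additive.toMul (lineq.symm v))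
    refine ⟨Additive.ofMul g, ?_⟩
    rw [hlam_apply]
    rw [show ((g : G ⧸ C)) = Additive.toMul (lineq.symm v) from hg]
    simp
  obtain ⟨σ, hσ⟩ := LinearMap.exists_rightInverse_of_surjective lam hlam_surj
  have hσ' : ∀ v, lam (σ v) = v := fun v => DFunLike.congr_fun hσ v
  have hker : ∀ g : G, lam (Additive.ofMul g) = 0 ↔ g ∈ C := by
    intro g
    rw [hlam_apply, LinearEquiv.map_eq_zero_iff]
    rw [show (0 : Additive (G ⧸ C)) = Additive.ofMul (1 : G ⧸ C) from rfl]
    rw [Additive.ofMul.apply_eq_iff_eq]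
    exact QuotientGroup.eq_one_iff g
  have memC : ∀ g : G, g / Additive.toMul (σ (lam (Additive.ofMul g))) ∈ C := by
    intro g
    rw [← hker]
    have h1 : Additive.ofMul (g / Additive.toMul (σ (lam (Additive.ofMul g)))) =
        Additive.ofMul g - σ (lam (Additive.ofMul g)) := by
      rw [ofMul_div]
      simp
    rw [h1, map_sub, hσ', sub_self]
  refine ⟨k, ⟨⟨fun g => (⟨g / Additive.toMul (σ (lam (Additive.ofMul g))), memC g⟩,
      fun i => Multiplicative.ofAdd (lam (Additive.ofMul g) i)),
    fun p => (p.1 : G) * Additive.toMul (σ (fun i => Multiplicative.toAdd (p.2 i))),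
    ?_, ?_⟩, ?_⟩, ?_, rfl⟩
  · intro g
    simp only [toAdd_ofAdd]
    show g / Additive.toMul (σ (lam (Additive.ofMul g))) *
      Additive.toMul (σ (fun i => lam (Additive.ofMul g) i)) = g
    rw [show (fun i => lam (Additive.ofMul g) i) = lam (Additive.ofMul g) from rfl]
    rw [div_mul_cancel]
  · rintro ⟨c, x⟩
    have hlc : lam (Additive.ofMul ((c : G) * Additive.toMul
        (σ (fun i => Multiplicative.toAdd (x i))))) = fun i => Multiplicative.toAdd (x i) := by
      rw [show Additive.ofMul ((c : G) * Additive.toMul (σ (fun i => Multiplicative.toAdd (x i))))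
        = Additive.ofMul (c : G) + σ (fun i => Multiplicative.toAdd (x i)) from by
          rw [ofMul_mul]; simp]
      rw [map_add, hσ', (hker _).mpr c.2, zero_add]
    refine Prod.ext ?_ ?_
    · apply Subtype.ext
      show (c : G) * Additive.toMul (σ (fun i => Multiplicative.toAdd (x i))) /
        Additive.toMul (σ (lam (Additive.ofMul _))) = (c : G)
      rw [hlc]
      rw [mul_div_cancel_right]
    · show (fun i => Multiplicative.ofAdd (lam (Additive.ofMul _) i)) = x
      funext i
      rw [hlc]
      simp
  · intro g h
    have hadd : lam (Additive.ofMul (g * h)) =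
        lam (Additive.ofMul g) + lam (Additive.ofMul h) := by
      rw [ofMul_mul, map_add]
    refine Prod.ext ?_ ?_
    · apply Subtype.ext
      show (g * h) / Additive.toMul (σ (lam (Additive.ofMul (g * h)))) =
        (g / Additive.toMul (σ (lam (Additive.ofMul g)))) *
        (h / Additive.toMul (σ (lam (Additive.ofMul h))))
      rw [hadd, map_add, div_mul_div_comm]
      congr 1
    · funext i
      show Multiplicative.ofAdd (lam (Additive.ofMul (g * h)) i) = _
      rw [hadd]
      rfl
  · intro c
    have h0 : lam (Additive.ofMul (c : G)) = 0 := (hker _).mpr c.2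
    refine Prod.ext ?_ ?_
    · apply Subtype.ext
      show (c : G) / Additive.toMul (σ (lam (Additive.ofMul (c : G)))) = (c : G)
      rw [h0, map_zero]
      simp
    · show (fun i => Multiplicative.ofAdd (lam (Additive.ofMul (c : G)) i)) = 1
      funext i
      rw [h0]
      rfl

/-- Let `P` be a finitely generated abelian group, `A ⊆ P` a subgroup, and `G₀` a
group containing (a copy of) `A`. As `B` ranges over the subgroups with
`A ⊆ B ⊆ P`, the amalgams `G₀ *_A B` fall into finitely many isomorphism
classes. -/
theorem finitely_many_amalgams
    (P : Type u) [CommGroup P] [Group.FG P] (A : Subgroup P)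
    (G₀ : Type u) [Group G₀] (j : ↥A →* G₀) (hj : Function.Injective j) :
    ∃ (k : ℕ) (T : Fin k → Type u) (_ : ∀ i, Group (T i)),
      ∀ (B : Subgroup P) (hAB : A ≤ B),
        ∃ i, Nonempty (Amalg G₀ P A B hAB j ≃* T i) := by
  classical
  -- the saturation of `A` in `P`
  let P₀ : Subgroup P :=
    { carrier := {p : P | ∃ n : ℕ, 0 < n ∧ p ^ n ∈ A}
      one_mem' := ⟨1, one_pos, by simpa using A.one_mem⟩
      mul_mem' := by
        rintro x y ⟨m, hm, hxm⟩ ⟨n, hn, hyn⟩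
        refine ⟨m * n, Nat.mul_pos hm hn, ?_⟩
        rw [mul_pow]
        refine A.mul_mem ?_ ?_
        · rw [pow_mul]; exact A.pow_mem hxm n
        · rw [mul_comm m n, pow_mul]; exact A.pow_mem hyn m
      inv_mem' := by
        rintro x ⟨n, hn, hxn⟩
        exact ⟨n, hn, by rw [inv_pow]; exact A.inv_mem hxn⟩ }
  have hP₀mem : ∀ p : P, p ∈ P₀ ↔ ∃ n : ℕ, 0 < n ∧ p ^ n ∈ A := fun p => Iff.rfl
  have hAP₀ : A ≤ P₀ := fun a ha => ⟨1, one_pos, by simpa using ha⟩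
  -- the set of possible middle groups
  set S₀ : Set (Subgroup P) := {C : Subgroup P | A ≤ C ∧ C ≤ P₀} with hS₀
  -- S₀ is finite
  have hS₀fin : S₀.Finite := by
    have hfinT : Finite ↥(P₀.map (QuotientGroup.mk' A)) := by
      haveI : Group.FG ↥(P₀.map (QuotientGroup.mk' A)) := comm_subgroup_fg _
      apply CommGroup.finite_of_fg_torsion
      intro x
      obtain ⟨p, hp, hpx⟩ := x.2
      obtain ⟨m, hm, hpm⟩ := hp
      refine isOfFinOrder_iff_pow_eq_one.mpr ⟨m, hm, ?_⟩
      apply Subtype.ext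
      show ((x : P ⧸ A) : P ⧸ A) ^ m = 1
      rw [← hpx, ← map_pow, QuotientGroup.mk'_apply, QuotientGroup.eq_one_iff]
      exact hpm
    have hsubsets : {D : Subgroup (P ⧸ A) | D ≤ P₀.map (QuotientGroup.mk' A)}.Finite := by
      have h1 : ((P₀.map (QuotientGroup.mk' A) : Subgroup (P ⧸ A)) : Set (P ⧸ A)).Finite :=
        Set.toFinite _
      have h2 : {D : Subgroup (P ⧸ A) | D ≤ P₀.map (QuotientGroup.mk' A)} =
          (fun D : Subgroup (P ⧸ A) => (D : Set (P ⧸ A))) ⁻¹'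
            {s | s ⊆ (P₀.map (QuotientGroup.mk' A) : Set (P ⧸ A))} := rfl
      rw [h2]
      exact Set.Finite.preimage (Set.injOn_of_injective SetLike.coe_injective)
        h1.finite_subsets
    have himg : (fun C : Subgroup P => C.map (QuotientGroup.mk' A)) '' S₀ ⊆
        {D : Subgroup (P ⧸ A) | D ≤ P₀.map (QuotientGroup.mk' A)} := by
      rintro D ⟨C, hC, rfl⟩
      exact Subgroup.map_mono hC.2
    refine Set.Finite.of_finite_image (hsubsets.subset himg) ?_
    intro C hC D hD h
    have h2 := congrArg (Subgroup.comap (QuotientGroup.mk' A)) h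
    simp only [Subgroup.comap_map_eq, QuotientGroup.ker_mk'] at h2
    rwa [sup_of_le_left hC.1, sup_of_le_left hD.1] at h2
  -- the uniform rank bound
  haveI : Module.Finite ℤ (Additive (P ⧸ P₀)) := Module.Finite.iff_addGroup_fg.mpr inferInstance
  set n : ℕ := Module.finrank ℤ (Additive (P ⧸ P₀)) with hn
  -- the index type
  haveI := hS₀fin.fintype
  let ι := ↥S₀ × Fin (n + 1)
  let Ty : ι → Type u := fun q =>
    Monoid.PushoutI (TMaps G₀ P A q.1.1 q.1.2.1 q.2.1 j)
  let eqv : ι ≃ Fin (Fintype.card ι) := Fintype.equivFin ι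
  refine ⟨Fintype.card ι, fun i => Ty (eqv.symm i),
    fun i => inferInstanceAs (Group (Monoid.PushoutI _)), ?_⟩
  intro B hAB
  haveI : Group.FG ↥B := comm_subgroup_fg B
  -- the subgroup of B corresponding to B ⊓ P₀
  set Csub : Subgroup ↥B := (B ⊓ P₀).subgroupOf B with hCsub
  have hsat : ∀ (g : ↥B) (m : ℕ), 0 < m → g ^ m ∈ Csub → g ∈ Csub := by
    intro g m hm hg
    rw [Subgroup.mem_subgroupOf] at hg ⊢
    obtain ⟨-, r, hr, hgr⟩ := hg
    refine ⟨g.2, m * r, Nat.mul_pos hm hr, ?_⟩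
    rw [pow_mul]
    rw [show ((g : P) ^ m) = ((g ^ m : ↥B) : P) from by push_cast; rfl]
    exact hgr
  obtain ⟨k, e, he, hk⟩ := exists_splitting ↥B Csub hsat
  -- bound k by n
  have hkn : k ≤ n := by
    rw [hk, hn]
    let ψ : ↥B ⧸ Csub →* P ⧸ P₀ :=
      QuotientGroup.lift Csub ((QuotientGroup.mk' P₀).comp B.subtype) (by
        intro x hx
        rw [Subgroup.mem_subgroupOf] at hx
        simpa [QuotientGroup.eq_one_iff] using hx.2)
    have hψ : Function.Injective ψ := by
      rw [injective_iff_map_eq_one]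
      intro a ha
      obtain ⟨g, rfl⟩ := QuotientGroup.mk'_surjective Csub a
      have hg : (g : P) ∈ P₀ := by
        rw [QuotientGroup.mk'_apply, QuotientGroup.lift_mk'] at ha
        simpa [QuotientGroup.eq_one_iff] using ha
      rw [QuotientGroup.mk'_apply, QuotientGroup.eq_one_iff]
      rw [Subgroup.mem_subgroupOf]
      exact ⟨g.2, hg⟩
    have hψ' : Function.Injective ⇑((MonoidHom.toAdditive ψ).toIntLinearMap) := fun a b h =>
      congrArg Additive.ofMul (hψ h)
    exact LinearMap.finrank_le_finrank_of_injective hψ'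
  -- membership of B ⊓ P₀ in S₀
  have hmem : B ⊓ P₀ ∈ S₀ := ⟨le_inf hAB hAP₀, inf_le_right⟩
  have hAC : A ≤ B ⊓ P₀ := le_inf hAB hAP₀
  -- the full equivalence
  let eC : ↥Csub ≃* ↥(B ⊓ P₀) := Subgroup.subgroupOfEquivOfLe inf_le_left
  let efull : ↥B ≃* ↥(B ⊓ P₀) × (Fin k → Multiplicative ℤ) :=
    e.trans (MulEquiv.prodCongr eC (MulEquiv.refl _))
  have hefix : ∀ a : ↥A, efull (Subgroup.inclusion hAB a) =
      (Subgroup.inclusion hAC a, 1) := by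
    intro a
    have hmemc : Subgroup.inclusion hAB a ∈ Csub := by
      rw [Subgroup.mem_subgroupOf]
      exact hAC a.2
    have h1 := he ⟨Subgroup.inclusion hAB a, hmemc⟩
    show (MulEquiv.prodCongr eC (MulEquiv.refl _)) (e (Subgroup.inclusion hAB a)) = _
    rw [show e (Subgroup.inclusion hAB a) =
      (⟨⟨Subgroup.inclusion hAB a, hmemc⟩, 1⟩ :
        ↥Csub × (Fin k → Multiplicative ℤ)) from h1]
    refine Prod.ext ?_ rfl
    apply Subtype.ext
    rfl
  -- conclude
  refine ⟨eqv ⟨⟨B ⊓ P₀, hmem⟩, ⟨k, Nat.lt_succ_of_le hkn⟩⟩, ?_⟩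
  show Nonempty (Amalg G₀ P A B hAB j ≃*
    Ty (eqv.symm (eqv ⟨⟨B ⊓ P₀, hmem⟩, ⟨k, Nat.lt_succ_of_le hkn⟩⟩)))
  rw [Equiv.symm_apply_apply]
  exact ⟨pushoutICongr (AmalgMaps G₀ P A B hAB j) (TMaps G₀ P A (B ⊓ P₀) hAC k j)
    (fun i => match i with
      | true => MulEquiv.refl G₀
      | false => efull)
    (fun i a => by cases i with
      | true => rfl
      | false => exact hefix a)⟩
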